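/- arXiv:2007.04469 — 2 statements merged into one kernel-verified Lean document; each statement's English description precedes it below -/
import Mathlib

section
/- Let n be even and λ a spiky function on E_n such that no transversal X has X and E_n − X in the same component of G_λ. Then λ is the connectivity function of a matroid. -/
/-- The ground set of a rank-`n` spike: `n` disjoint legs, where the leg `i` consists of
`x_i = (i, true)` and `y_i = (i, false)`. -/
abbrev En (n : ℕ) := Fin n × Bool

/-- The `i`-th leg `L_i = {x_i, y_i}`. -/
def leg (n : ℕ) (i : Fin n) : Set (En n) := {(i, true), (i, false)}

/-- A transversal: a set containing exactly one element of each leg. -/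
def IsTransversal {n : ℕ} (X : Set (En n)) : Prop :=
  ∀ i : Fin n, ((i, true) ∈ X ∧ (i, false) ∉ X) ∨ ((i, true) ∉ X ∧ (i, false) ∈ X)

/-- The hypercube graph `H_n` on transversals: two transversals are adjacent iff they
differ in exactly one element (i.e. their symmetric difference has two elements). -/
def Hn (n : ℕ) : SimpleGraph (Set (En n)) where
  Adj X Y := IsTransversal X ∧ IsTransversal Y ∧ (symmDiff X Y).ncard = 2
  symm := ⟨fun X Y ⟨h1, h2, h3⟩ => ⟨h2, h1, by rwa [symmDiff_comm]⟩⟩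
  loopless := ⟨fun X ⟨_, _, h3⟩ => by
    simp [symmDiff_self, Set.bot_eq_empty] at h3⟩

/-- `I` is an independent set of the hypercube graph `H_n`. -/
def IndepInHn (n : ℕ) (I : Set (Set (En n))) : Prop :=
  (∀ X ∈ I, IsTransversal X) ∧ ∀ X ∈ I, ∀ Y ∈ I, ¬ (Hn n).Adj X Y

/-- `l(X)`: the number of legs which `X` meets. -/
noncomputable def legCount {n : ℕ} (X : Set (En n)) : ℕ :=
  Set.ncard {i : Fin n | (i, true) ∈ X ∨ (i, false) ∈ X}

/-- The rank of a set `X` in a matroid `M`: the largest cardinality of an independent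
subset of `X`. -/
noncomputable def mrank {α : Type*} (M : Matroid α) (X : Set α) : ℕ :=
  sSup {k | ∃ I, M.Indep I ∧ I ⊆ X ∧ I.ncard = k}

/-- The connectivity function of a matroid: μ_M(X) = r(X) + r(E−X) − r(E). -/
noncomputable def mconn {α : Type*} (M : Matroid α) (X : Set α) : ℤ :=
  (mrank M X : ℤ) + (mrank M (M.E \ X) : ℤ) - (mrank M M.E : ℤ)

/-- A circuit of a matroid: a minimal dependent subset of the ground set. -/
def IsCircuit {α : Type*} (M : Matroid α) (C : Set α) : Prop :=
  C ⊆ M.E ∧ ¬ M.Indep C ∧ ∀ D ⊂ C, M.Indep D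

/-- The circuits `{x_i, y_i, x_j, y_j}` for `i < j` (i.e. unions of two distinct legs). -/
def LegPairs (n : ℕ) : Set (Set (En n)) :=
  {C | ∃ i j : Fin n, i ≠ j ∧ C = leg n i ∪ leg n j}

/-- The circuit collection of the spike `S(I)`: unions of two legs, the transversals
in `I`, and all `(n+1)`-element sets containing none of the preceding circuits. -/
def SpikeCircuits (n : ℕ) (I : Set (Set (En n))) : Set (Set (En n)) :=
  (LegPairs n ∪ I) ∪ {C | C.ncard = n + 1 ∧ ∀ D ∈ LegPairs n ∪ I, ¬ D ⊆ C}

open Classical in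
/-- The rank function of the free spike `S(∅)` (every rank-`n` spike has this rank
function away from the transversals). -/
noncomputable def freeSpikeRank (n : ℕ) (X : Set (En n)) : ℕ :=
  if ∀ i : Fin n, ¬ Disjoint (leg n i) X then n
  else if ∃ i, leg n i ⊆ X then legCount X + 1
  else X.ncard

/-- `λ_n(X) = r_n(X) + r_n(E_n − X) − n`: the common value of the connectivity function
of any rank-`n` spike on a non-transversal set `X`. -/
noncomputable def lamN (n : ℕ) (X : Set (En n)) : ℤ :=
  (freeSpikeRank n X : ℤ) + (freeSpikeRank n Xᶜ : ℤ) - (n : ℤ)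

/-- A spiky function: symmetric, extends `λ_n` on non-transversals, takes values in
`{n−2, n−1, n}` on transversals, and satisfies `λ(X) + λ(Y) ≥ 2n−2` for transversals
`X`, `Y` differing in exactly one element. -/
noncomputable def IsSpiky (n : ℕ) (lam : Set (En n) → ℕ) : Prop :=
  (∀ X, lam X = lam Xᶜ) ∧
  (∀ X, ¬ IsTransversal X → (lam X : ℤ) = lamN n X) ∧
  (∀ X, IsTransversal X → lam X = n - 2 ∨ lam X = n - 1 ∨ lam X = n) ∧
  (∀ X Y, IsTransversal X → IsTransversal Y → (symmDiff X Y).ncard = 2 →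
    2 * n - 2 ≤ lam X + lam Y)

/-- The induced subgraph of `G` on the vertex set `S` (other vertices become isolated). -/
def inducedOn {α : Type*} (G : SimpleGraph α) (S : Set α) : SimpleGraph α where
  Adj a b := G.Adj a b ∧ a ∈ S ∧ b ∈ S
  symm := ⟨fun a b ⟨h, ha, hb⟩ => ⟨h.symm, hb, ha⟩⟩
  loopless := ⟨fun a ⟨h, _, _⟩ => G.loopless.irrefl a h⟩

/-- `G_λ`: the induced subgraph of `H_n` on the transversals `X` with `λ(X) = n − 1`. -/
noncomputable def Glam (n : ℕ) (lam : Set (En n) → ℕ) : SimpleGraph (Set (En n)) :=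
  inducedOn (Hn n) {Z | lam Z = n - 1}


/-! ### Auxiliary development -/

namespace SpikeAux

open Set

variable {n : ℕ}

/-- The partner of an element within its leg. -/
def ptn (e : En n) : En n := (e.1, !e.2)

lemma ptn_ptn (e : En n) : ptn (ptn e) = e := by simp [ptn]

lemma ptn_inj : Function.Injective (ptn (n := n)) := by
  intro a b h
  have := congrArg ptn h
  simpa [ptn_ptn] using this

lemma ptn_ne (e : En n) : ptn e ≠ e := by
  obtain ⟨a, b⟩ := e
  cases b <;> simp [ptn, Prod.ext_iff]

lemma ptn_fst (e : En n) : (ptn e).1 = e.1 := rfl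

lemma mem_leg {i : Fin n} {e : En n} : e ∈ leg n i ↔ e.1 = i := by
  obtain ⟨a, b⟩ := e
  cases b <;> simp [leg, Prod.ext_iff]

lemma leg_eq_pair (e : En n) : leg n e.1 = {e, ptn e} := by
  obtain ⟨a, b⟩ := e
  cases b <;> simp [leg, ptn, Set.pair_comm]

lemma mem_leg_self (e : En n) : e ∈ leg n e.1 := mem_leg.mpr rfl

lemma ptn_mem_leg (e : En n) : ptn e ∈ leg n e.1 := mem_leg.mpr rfl

lemma ncard_leg (i : Fin n) : (leg n i).ncard = 2 :=
  Set.ncard_pair (by simp [Prod.ext_iff])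

/-- The set of legs fully contained in `X`. -/
def fullLegs (X : Set (En n)) : Set (Fin n) := {i | leg n i ⊆ X}

/-- The set of legs met by `X`. -/
def metLegs (X : Set (En n)) : Set (Fin n) := {i | (i, true) ∈ X ∨ (i, false) ∈ X}

lemma legCount_eq (X : Set (En n)) : legCount X = (metLegs X).ncard := rfl

lemma mem_metLegs_of_mem {X : Set (En n)} {e : En n} (he : e ∈ X) : e.1 ∈ metLegs X := by
  obtain ⟨a, b⟩ := e
  cases b
  · exact Or.inr he
  · exact Or.inl he

lemma full_of_pair {X : Set (En n)} {e : En n} (he : e ∈ X) (he' : ptn e ∈ X) :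
    e.1 ∈ fullLegs X := by
  intro x hx
  rw [leg_eq_pair] at hx
  rcases hx with h | h
  · exact h ▸ he
  · exact h ▸ he'

lemma eq_ptn_of_same_leg {e e' : En n} (hne : e ≠ e') (h1 : e'.1 = e.1) : e' = ptn e := by
  have : e' ∈ leg n e.1 := mem_leg.mpr h1
  rw [leg_eq_pair] at this
  rcases this with h | h
  · exact absurd h.symm hne
  · exact h

lemma metLegs_mono {X Y : Set (En n)} (h : X ⊆ Y) : metLegs X ⊆ metLegs Y := by
  intro i hi
  rcases hi with h1 | h1
  · exact Or.inl (h h1)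
  · exact Or.inr (h h1)

lemma fullLegs_mono {X Y : Set (En n)} (h : X ⊆ Y) : fullLegs X ⊆ fullLegs Y :=
  fun _ hi => hi.trans h

lemma legCount_le_n (X : Set (En n)) : legCount X ≤ n := by
  rw [legCount_eq]
  calc (metLegs X).ncard ≤ (Set.univ : Set (Fin n)).ncard :=
        Set.ncard_le_ncard (subset_univ _) (toFinite _)
    _ = n := by simp [Set.ncard_univ]

lemma legCount_mono {X Y : Set (En n)} (h : X ⊆ Y) : legCount X ≤ legCount Y :=
  Set.ncard_le_ncard (metLegs_mono h) (toFinite _)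

lemma injOn_fst_of_no_full {X : Set (En n)} (hX : fullLegs X = ∅) :
    Set.InjOn Prod.fst X := by
  intro e he e' he' h1
  by_contra hne
  have he'' : e' = ptn e := eq_ptn_of_same_leg hne h1.symm
  have : e.1 ∈ fullLegs X := full_of_pair he (he'' ▸ he')
  simp [hX] at this

lemma card_le_legCount {X : Set (En n)} (hX : fullLegs X = ∅) : X.ncard ≤ legCount X := by
  rw [legCount_eq]
  exact Set.ncard_le_ncard_of_injOn Prod.fst (fun e he => mem_metLegs_of_mem he)
    (injOn_fst_of_no_full hX) (toFinite _)

lemma card_le_legCount_succ {X : Set (En n)} (hX : (fullLegs X).Subsingleton) :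
    X.ncard ≤ legCount X + 1 := by
  by_cases hF : fullLegs X = ∅
  · exact (card_le_legCount hF).trans (Nat.le_succ _)
  · obtain ⟨i0, hi0⟩ := Set.nonempty_iff_ne_empty.mpr hF
    have hfull : ∀ j ∈ fullLegs X, j = i0 := fun j hj => hX hj hi0
    -- injection of X \ leg i0 into metLegs X \ {i0}
    have hinj : Set.InjOn Prod.fst (X \ leg n i0) := by
      intro e he e' he' h1
      by_contra hne
      have he'' : e' = ptn e := eq_ptn_of_same_leg hne h1.symm
      have hfl : e.1 ∈ fullLegs X := full_of_pair he.1 (he'' ▸ he'.1)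
      have : e.1 = i0 := hfull _ hfl
      exact he.2 (mem_leg.mpr this)
    have hmap : ∀ e ∈ X \ leg n i0, e.1 ∈ metLegs X \ {i0} := by
      intro e he
      refine ⟨mem_metLegs_of_mem he.1, ?_⟩
      simp only [mem_singleton_iff]
      intro hcon
      exact he.2 (mem_leg.mpr hcon)
    have h1 : (X \ leg n i0).ncard ≤ (metLegs X \ {i0}).ncard :=
      Set.ncard_le_ncard_of_injOn Prod.fst hmap hinj (toFinite _)
    have hi0m : i0 ∈ metLegs X := mem_metLegs_of_mem (X := X) (e := (i0, true)) (hi0 (by simp [leg]))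
    have h2 : (metLegs X \ {i0}).ncard = legCount X - 1 := by
      rw [legCount_eq]
      exact Set.ncard_diff_singleton_of_mem hi0m
    have h3 : 1 ≤ legCount X := by
      rw [legCount_eq]
      exact (Set.ncard_pos (toFinite _)).mpr ⟨i0, hi0m⟩
    have h4 : (X ∩ leg n i0).ncard + (X \ leg n i0).ncard = X.ncard :=
      Set.ncard_inter_add_ncard_diff_eq_ncard X (leg n i0) (toFinite _)
    have h5 : (X ∩ leg n i0).ncard ≤ 2 := by
      calc (X ∩ leg n i0).ncard ≤ (leg n i0).ncard :=
            Set.ncard_le_ncard inter_subset_right (toFinite _)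
        _ = 2 := ncard_leg i0
    omega

/-- Selection: one element from each met leg, preferring the `true` element. -/
def sel (X : Set (En n)) : Set (En n) := {e | e ∈ X ∧ (e.2 = true ∨ (e.1, true) ∉ X)}

lemma sel_subset (X : Set (En n)) : sel X ⊆ X := fun _ he => he.1

lemma metLegs_sel (X : Set (En n)) : metLegs (sel X) = metLegs X := by
  apply Set.Subset.antisymm (metLegs_mono (sel_subset X))
  intro i hi
  by_cases ht : (i, true) ∈ X
  · exact Or.inl ⟨ht, Or.inl rfl⟩
  · rcases hi with h1 | h1
    · exact absurd h1 ht
    · exact Or.inr ⟨h1, Or.inr ht⟩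

lemma fullLegs_sel (X : Set (En n)) : fullLegs (sel X) = ∅ := by
  ext i
  simp only [fullLegs, mem_setOf_eq, mem_empty_iff_false, iff_false]
  intro hcon
  have h1 : (i, true) ∈ sel X := hcon (by simp [leg])
  have h2 : (i, false) ∈ sel X := hcon (by simp [leg])
  rcases h2.2 with h | h
  · simp at h
  · exact h h1.1

lemma image_fst (S : Set (En n)) : Prod.fst '' S = metLegs S := by
  ext i
  constructor
  · rintro ⟨e, he, rfl⟩
    exact mem_metLegs_of_mem he
  · rintro (h1 | h1)
    · exact ⟨(i, true), h1, rfl⟩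
    · exact ⟨(i, false), h1, rfl⟩

lemma ncard_sel (X : Set (En n)) : (sel X).ncard = legCount X := by
  have h1 : (Prod.fst '' sel X).ncard = (sel X).ncard :=
    Set.ncard_image_of_injOn (injOn_fst_of_no_full (fullLegs_sel X))
  rw [image_fst, metLegs_sel] at h1
  rw [← h1, legCount_eq]

/-! ### Transversals -/

lemma transversal_fullLegs {X : Set (En n)} (hX : IsTransversal X) : fullLegs X = ∅ := by
  ext i
  simp only [fullLegs, mem_setOf_eq, mem_empty_iff_false, iff_false]
  intro hcon
  rcases hX i with ⟨_, h2⟩ | ⟨h1, _⟩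
  · exact h2 (hcon (by simp [leg]))
  · exact h1 (hcon (by simp [leg]))

lemma transversal_metLegs {X : Set (En n)} (hX : IsTransversal X) : metLegs X = univ := by
  ext i
  simp only [mem_univ, iff_true]
  rcases hX i with ⟨h1, _⟩ | ⟨_, h2⟩
  · exact Or.inl h1
  · exact Or.inr h2

lemma isTransversal_of (hF : fullLegs X = ∅) (hM : metLegs (n := n) X = univ) :
    IsTransversal X := by
  intro i
  have hi : i ∈ metLegs X := hM ▸ mem_univ i
  have hni : ¬ ((i, true) ∈ X ∧ (i, false) ∈ X) := by
    intro ⟨h1, h2⟩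
    have : i ∈ fullLegs X := by
      intro x hx
      rcases hx with h | h
      · exact h ▸ h1
      · simp only [leg, mem_singleton_iff] at h
        exact h ▸ h2
    simp [hF] at this
  rcases hi with h1 | h1
  · exact Or.inl ⟨h1, fun hc => hni ⟨h1, hc⟩⟩
  · exact Or.inr ⟨fun hc => hni ⟨hc, h1⟩, h1⟩

lemma transversal_sel {X : Set (En n)} (hX : IsTransversal X) : sel X = X := by
  apply Set.Subset.antisymm (sel_subset X)
  intro e he
  obtain ⟨a, b⟩ := e
  cases b
  · rcases hX a with ⟨_, h2⟩ | ⟨h1, _⟩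
    · exact absurd he h2
    · exact ⟨he, Or.inr h1⟩
  · exact ⟨he, Or.inl rfl⟩

lemma transversal_ncard {X : Set (En n)} (hX : IsTransversal X) : X.ncard = n := by
  rw [← transversal_sel hX, ncard_sel, legCount_eq, transversal_metLegs hX]
  simp [Set.ncard_univ]

lemma transversal_compl {X : Set (En n)} (hX : IsTransversal X) : IsTransversal Xᶜ := by
  intro i
  rcases hX i with ⟨h1, h2⟩ | ⟨h1, h2⟩
  · exact Or.inr ⟨by simpa using h1, by simpa using h2⟩
  · exact Or.inl ⟨by simpa using h1, by simpa using h2⟩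

lemma isTransversal_compl_iff {X : Set (En n)} : IsTransversal Xᶜ ↔ IsTransversal X :=
  ⟨fun h => by simpa using transversal_compl h, fun h => transversal_compl h⟩

lemma transversal_mem_iff_ptn {X : Set (En n)} (hX : IsTransversal X) (e : En n) :
    e ∈ X ↔ ptn e ∉ X := by
  obtain ⟨a, b⟩ := e
  rcases hX a with ⟨h1, h2⟩ | ⟨h1, h2⟩ <;> cases b <;> simp [ptn, h1, h2]

/-! ### freeSpikeRank -/

lemma not_disjoint_iff_all {X : Set (En n)} :
    (∀ i : Fin n, ¬ Disjoint (leg n i) X) ↔ metLegs X = univ := by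
  have key : ∀ i : Fin n, ¬ Disjoint (leg n i) X ↔ i ∈ metLegs X := by
    intro i
    rw [Set.not_disjoint_iff]
    constructor
    · rintro ⟨x, hx1, hx2⟩
      exact (mem_leg.mp hx1) ▸ mem_metLegs_of_mem hx2
    · rintro (h | h)
      · exact ⟨(i, true), by simp [leg], h⟩
      · exact ⟨(i, false), by simp [leg], h⟩
  constructor
  · intro h
    exact eq_univ_of_forall fun i => (key i).mp (h i)
  · intro h i
    exact (key i).mpr (h ▸ mem_univ i)

lemma exists_full_iff {X : Set (En n)} : (∃ i, leg n i ⊆ X) ↔ fullLegs X ≠ ∅ := by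
  rw [← Set.nonempty_iff_ne_empty]
  rfl

lemma freeSpikeRank_of_metAll {X : Set (En n)} (h : metLegs X = univ) :
    freeSpikeRank n X = n := by
  rw [freeSpikeRank, if_pos (not_disjoint_iff_all.mpr h)]

lemma freeSpikeRank_of_full {X : Set (En n)} (h : metLegs X ≠ univ) (h2 : fullLegs X ≠ ∅) :
    freeSpikeRank n X = legCount X + 1 := by
  rw [freeSpikeRank, if_neg (fun hc => h (not_disjoint_iff_all.mp hc)),
    if_pos (exists_full_iff.mpr h2)]

lemma freeSpikeRank_else {X : Set (En n)} (h : metLegs X ≠ univ) (h2 : fullLegs X = ∅) :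
    freeSpikeRank n X = X.ncard := by
  rw [freeSpikeRank, if_neg (fun hc => h (not_disjoint_iff_all.mp hc)),
    if_neg (fun hc => (exists_full_iff.mp hc) h2)]

/-! ### Parity -/

/-- Parity of a set of elements: evenness of the number of `true`-elements. -/
def par (X : Set (En n)) : Prop := Even (Set.ncard {i : Fin n | (i, true) ∈ X})

lemma par_flip_aux {A B : Set (Fin n)} {j : Fin n} (hA : A = insert j B) (hj : j ∉ B) :
    ¬ (Even A.ncard ↔ Even B.ncard) := by
  rw [hA, Set.ncard_insert_of_notMem hj (toFinite _)]
  simp only [Nat.even_add_one]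
  tauto

lemma adj_parity {X Y : Set (En n)} (hX : IsTransversal X) (hY : IsTransversal Y)
    (hd : (symmDiff X Y).ncard = 2) : ¬ (par X ↔ par Y) := by
  set A := {i : Fin n | (i, true) ∈ X} with hAdef
  set B := {i : Fin n | (i, true) ∈ Y} with hBdef
  have key : ∀ (i : Fin n) (b : Bool), (i, b) ∈ symmDiff X Y ↔ i ∈ symmDiff A B := by
    intro i b
    have hXf : (i, false) ∈ X ↔ (i, true) ∉ X := by
      rcases hX i with ⟨h1, h2⟩ | ⟨h1, h2⟩ <;> simp [h1, h2]
    have hYf : (i, false) ∈ Y ↔ (i, true) ∉ Y := by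
      rcases hY i with ⟨h1, h2⟩ | ⟨h1, h2⟩ <;> simp [h1, h2]
    cases b <;> simp only [Set.mem_symmDiff, hAdef, hBdef, mem_setOf_eq, hXf, hYf] <;> tauto
  have hne : (symmDiff A B).Nonempty := by
    rw [Set.nonempty_iff_ne_empty]
    intro hcon
    have : symmDiff X Y = ∅ := by
      ext e
      obtain ⟨i, b⟩ := e
      simp [key i b, hcon]
    rw [this] at hd
    simp at hd
  obtain ⟨j, hj⟩ := hne
  have hsing : symmDiff A B = {j} := by
    ext i
    simp only [mem_singleton_iff]
    constructor
    · intro hi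
      by_contra hij
      have hsub : ({(i, true), (i, false), (j, true), (j, false)} : Set (En n)) ⊆ symmDiff X Y := by
        intro x hx
        rcases hx with rfl | rfl | rfl | rfl
        · exact (key i true).mpr hi
        · exact (key i false).mpr hi
        · exact (key j true).mpr hj
        · exact (key j false).mpr hj
      have h4 : ({(i, true), (i, false), (j, true), (j, false)} : Set (En n)).ncard = 4 := by
        rw [Set.ncard_insert_of_notMem (by simp [Prod.ext_iff, hij]) (toFinite _),
          Set.ncard_insert_of_notMem (by simp [Prod.ext_iff, hij]) (toFinite _),
          Set.ncard_pair (by simp [Prod.ext_iff])]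
      have := Set.ncard_le_ncard hsub (toFinite _)
      rw [h4, hd] at this
      omega
    · rintro rfl; exact hj
  -- now use the singleton symmetric difference to flip parity
  rw [Set.mem_symmDiff] at hj
  simp only [par, ← hAdef, ← hBdef]
  rcases hj with ⟨hjA, hjB⟩ | ⟨hjB, hjA⟩
  · have hAB : A = insert j B := by
      ext x
      constructor
      · intro hx
        by_cases hxB : x ∈ B
        · exact Set.mem_insert_of_mem _ hxB
        · have : x ∈ symmDiff A B := Set.mem_symmDiff.mpr (Or.inl ⟨hx, hxB⟩)
          rw [hsing] at this
          exact this ▸ Set.mem_insert _ _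
      · rintro (rfl | hx)
        · exact hjA
        · by_contra hxA
          have : x ∈ symmDiff A B := Set.mem_symmDiff.mpr (Or.inr ⟨hx, hxA⟩)
          rw [hsing, mem_singleton_iff] at this
          exact hjB (this ▸ hx)
    exact par_flip_aux hAB hjB
  · have hBA : B = insert j A := by
      ext x
      constructor
      · intro hx
        by_cases hxA : x ∈ A
        · exact Set.mem_insert_of_mem _ hxA
        · have : x ∈ symmDiff A B := Set.mem_symmDiff.mpr (Or.inr ⟨hx, hxA⟩)
          rw [hsing] at this
          exact this ▸ Set.mem_insert _ _
      · rintro (rfl | hx)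
        · exact hjB
        · by_contra hxB
          have : x ∈ symmDiff A B := Set.mem_symmDiff.mpr (Or.inl ⟨hx, hxB⟩)
          rw [hsing, mem_singleton_iff] at this
          exact hjA (this ▸ hx)
    intro hiff
    exact par_flip_aux hBA hjA (Iff.symm hiff)

lemma par_compl (heven : Even n) (X : Set (En n)) : par Xᶜ ↔ par X := by
  have hset : {i : Fin n | (i, true) ∈ Xᶜ} = {i : Fin n | (i, true) ∈ X}ᶜ := by
    ext i; simp
  have hsum : {i : Fin n | (i, true) ∈ X}.ncard + {i : Fin n | (i, true) ∈ X}ᶜ.ncard = n := by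
    rw [Set.ncard_add_ncard_compl]
    simp
  simp only [par, hset, Nat.even_iff]
  rw [Nat.even_iff] at heven
  omega

/-! ### The matroid construction -/

variable (n) in
/-- Independent sets of the spike `S(I)`. -/
def SpInd (I : Set (Set (En n))) (Y : Set (En n)) : Prop :=
  Y.ncard ≤ n ∧ (fullLegs Y).Subsingleton ∧ Y ∉ I

lemma spind_empty (hn : 0 < n) (I : Set (Set (En n))) (hI1 : ∀ X ∈ I, IsTransversal X) :
    SpInd n I ∅ := by
  refine ⟨by simp, ?_, ?_⟩
  · intro i hi j hj
    exfalso
    exact (hi (mem_leg_self (i, true)) : (i, true) ∈ (∅ : Set (En n)))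
  · intro hcon
    have := transversal_ncard (hI1 _ hcon)
    simp at this
    omega

lemma spind_subset {I : Set (Set (En n))} (hI1 : ∀ X ∈ I, IsTransversal X)
    ⦃J Y : Set (En n)⦄ (hY : SpInd n I Y) (hJY : J ⊆ Y) : SpInd n I J := by
  obtain ⟨h1, h2, h3⟩ := hY
  refine ⟨le_trans (Set.ncard_le_ncard hJY (toFinite _)) h1, h2.anti (fullLegs_mono hJY), ?_⟩
  intro hcon
  have hJn : J.ncard = n := transversal_ncard (hI1 _ hcon)
  have : J = Y := Set.eq_of_subset_of_ncard_le hJY (by omega) (toFinite _)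
  exact h3 (this ▸ hcon)

lemma fullLegs_insert_sub {Y : Set (En n)} {e : En n} (he : e ∉ Y) {i : Fin n}
    (hi : i ∈ fullLegs (insert e Y)) : i ∈ fullLegs Y ∨ (i = e.1 ∧ ptn e ∈ Y) := by
  by_cases hiY : i ∈ fullLegs Y
  · exact Or.inl hiY
  · right
    obtain ⟨u, hu1, hu2⟩ : ∃ u ∈ leg n i, u ∉ Y := by
      by_contra hcon
      push_neg at hcon
      exact hiY hcon
    have hue : u = e := by
      rcases hi hu1 with h | h
      · exact h
      · exact absurd h hu2
    subst hue
    have hfst : i = u.1 := (mem_leg.mp hu1).symm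
    refine ⟨hfst, ?_⟩
    have hp : ptn u ∈ insert u Y := hi (hfst ▸ ptn_mem_leg u)
    rcases hp with h | h
    · exact absurd h (ptn_ne u)
    · exact h

lemma spike_aug {I : Set (Set (En n))} (hI : IndepInHn n I)
    ⦃Y Z : Set (En n)⦄ (hY : SpInd n I Y) (hZ : SpInd n I Z) (hlt : Y.ncard < Z.ncard) :
    ∃ e ∈ Z, e ∉ Y ∧ SpInd n I (insert e Y) := by
  obtain ⟨hI1, hI2⟩ := hI
  by_contra hcon
  push_neg at hcon
  have hZn : Z.ncard ≤ n := hZ.1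
  have hsize : ∀ e : En n, e ∉ Y → (insert e Y).ncard = Y.ncard + 1 := fun e he =>
    Set.ncard_insert_of_notMem he (toFinite _)
  have hD1ne : ∃ e ∈ Z, e ∉ Y := by
    by_contra hc
    push_neg at hc
    have := Set.ncard_le_ncard hc (toFinite _)
    omega
  by_cases hF : fullLegs Y = ∅
  · -- Case A : no full leg in Y
    have hmem : ∀ e ∈ Z, e ∉ Y → insert e Y ∈ I := by
      intro e heZ heY
      have h1 : (insert e Y).ncard ≤ n := by rw [hsize e heY]; omega
      have h2 : (fullLegs (insert e Y)).Subsingleton := by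
        intro i hi j hj
        rcases fullLegs_insert_sub heY hi with h | h
        · simp [hF] at h
        · rcases fullLegs_insert_sub heY hj with h' | h'
          · simp [hF] at h'
          · rw [h.1, h'.1]
      by_contra hni
      exact hcon e heZ heY ⟨h1, h2, hni⟩
    obtain ⟨e, heZ, heY⟩ := hD1ne
    by_cases htwo : ∃ e' ∈ Z, e' ∉ Y ∧ e' ≠ e
    · obtain ⟨e', he'Z, he'Y, hne⟩ := htwo
      have hT : insert e Y ∈ I := hmem e heZ heY
      have hT' : insert e' Y ∈ I := hmem e' he'Z he'Y
      apply hI2 _ hT _ hT'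
      refine ⟨hI1 _ hT, hI1 _ hT', ?_⟩
      have : symmDiff (insert e Y) (insert e' Y) = {e, e'} := by
        ext x
        simp only [Set.mem_symmDiff, Set.mem_insert_iff, mem_singleton_iff]
        constructor
        · rintro (⟨rfl | hx, hx2⟩ | ⟨rfl | hx, hx2⟩)
          · exact Or.inl rfl
          · exact absurd (Or.inr hx) hx2
          · exact Or.inr rfl
          · exact absurd (Or.inr hx) hx2
        · rintro (rfl | rfl)
          · exact Or.inl ⟨Or.inl rfl, by rintro (rfl | hx); exacts [hne rfl, heY hx]⟩
          · exact Or.inr ⟨Or.inl rfl, by rintro (rfl | hx); exacts [hne rfl, he'Y hx]⟩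
      rw [this]
      exact Set.ncard_pair (Ne.symm hne)
    · -- Z \ Y = {e}
      push_neg at htwo
      have hZsub : Z ⊆ insert e Y := by
        intro x hx
        by_cases hxY : x ∈ Y
        · exact Set.mem_insert_of_mem _ hxY
        · exact (htwo x hx hxY) ▸ Set.mem_insert _ _
      have hZeq : Z = insert e Y := by
        apply Set.eq_of_subset_of_ncard_le hZsub _ (toFinite _)
        rw [hsize e heY]
        omega
      exact hZ.2.2 (hZeq ▸ hmem e heZ heY)
  · -- Case B : Y has a full leg i0
    obtain ⟨i0, hi0⟩ := Set.nonempty_iff_ne_empty.mpr hF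
    have hYss : ∀ j ∈ fullLegs Y, j = i0 := fun j hj => hY.2.1 hj hi0
    have hptn : ∀ e ∈ Z, e ∉ Y → ptn e ∈ Y := by
      intro e heZ heY
      by_contra hp
      apply hcon e heZ heY
      have h1 : (insert e Y).ncard ≤ n := by rw [hsize e heY]; omega
      have h2 : (fullLegs (insert e Y)).Subsingleton := by
        intro a ha b hb
        rcases fullLegs_insert_sub heY ha with h | h
        · rcases fullLegs_insert_sub heY hb with h' | h'
          · rw [hYss a h, hYss b h']
          · exact absurd h'.2 hp
        · exact absurd h.2 hp
      have h3 : insert e Y ∉ I := by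
        intro hmem
        have := transversal_fullLegs (hI1 _ hmem)
        have : i0 ∈ fullLegs (insert e Y) := fullLegs_mono (Set.subset_insert e Y) hi0
        simp_all
      exact ⟨h1, h2, h3⟩
    -- counting argument
    set D1 := Z \ Y with hD1
    set D2 := Y \ Z with hD2
    set T := {e ∈ D1 | ptn e ∈ Z} with hT
    have hTsub : T ⊆ D1 := fun e he => he.1
    have hTss : T.Subsingleton := by
      intro e he e' he'
      have hfe : e.1 ∈ fullLegs Z := full_of_pair he.1.1 he.2
      have hfe' : e'.1 ∈ fullLegs Z := full_of_pair he'.1.1 he'.2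
      have h1 : e'.1 = e.1 := (hZ.2.1 hfe' hfe)
      by_contra hne
      have : e' = ptn e := eq_ptn_of_same_leg hne h1
      have hpY : ptn e ∈ Y := hptn e he.1.1 he.1.2
      exact he'.1.2 (this ▸ hpY)
    have hinj : Set.InjOn ptn (D1 \ T) := fun a _ b _ hab => ptn_inj hab
    have hmapsto : ∀ e ∈ D1 \ T, ptn e ∈ D2 := by
      intro e ⟨heD1, heT⟩
      refine ⟨hptn e heD1.1 heD1.2, ?_⟩
      intro hpZ
      exact heT ⟨heD1, hpZ⟩
    have hc1 : (D1 \ T).ncard ≤ D2.ncard :=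
      Set.ncard_le_ncard_of_injOn ptn hmapsto hinj (toFinite _)
    have hc2 : (D1 \ T).ncard = D1.ncard - T.ncard := Set.ncard_diff hTsub (toFinite _)
    have hc3 : T.ncard ≤ 1 := (Set.ncard_le_one (toFinite _)).mpr hTss
    have hc4 : D2.ncard < D1.ncard := by
      have e1 : (Y ∩ Z).ncard + (Y \ Z).ncard = Y.ncard :=
        Set.ncard_inter_add_ncard_diff_eq_ncard Y Z (toFinite _)
      have e2 : (Z ∩ Y).ncard + (Z \ Y).ncard = Z.ncard :=
        Set.ncard_inter_add_ncard_diff_eq_ncard Z Y (toFinite _)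
      rw [Set.inter_comm] at e2
      simp only [hD1, hD2]
      omega
    have hTone : T.ncard = 1 := by omega
    have hD1T : (D1 \ T).ncard = D2.ncard := by omega
    have himg : ptn '' (D1 \ T) = D2 := by
      apply Set.eq_of_subset_of_ncard_le
      · rintro x ⟨e, he, rfl⟩
        exact hmapsto e he
      · rw [Set.ncard_image_of_injOn hinj, hD1T]
      · exact toFinite _
    obtain ⟨e0, he0⟩ := Set.ncard_eq_one.mp hTone
    have he0T : e0 ∈ T := he0 ▸ rfl
    have he0full : e0.1 ∈ fullLegs Z := full_of_pair he0T.1.1 he0T.2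
    have he0ne : e0.1 ≠ i0 := by
      intro hc
      exact he0T.1.2 (hi0 (hc ▸ mem_leg_self e0))
    have hi0Z : i0 ∈ fullLegs Z := by
      intro u hu
      have huY : u ∈ Y := hi0 hu
      by_contra huZ
      have huD2 : u ∈ D2 := ⟨huY, huZ⟩
      rw [← himg] at huD2
      obtain ⟨e, he, hpe⟩ := huD2
      have : e = ptn u := by rw [← hpe, ptn_ptn]
      have heleg : e ∈ leg n i0 := by
        rw [this]
        have : u.1 = i0 := mem_leg.mp hu
        exact this ▸ ptn_mem_leg u
      exact he.1.2 (hi0 heleg)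
    exact he0ne (hZ.2.1 he0full hi0Z)

variable (n) in
/-- The spike matroid determined by an independent set `I` of the hypercube. -/
noncomputable def SpM (hn : 0 < n) (I : Set (Set (En n))) (hI : IndepInHn n I) : Matroid (En n) :=
  (IndepMatroid.ofFinite (Set.finite_univ) (SpInd n I)
    (spind_empty hn I hI.1)
    (fun J Y hY hJY => spind_subset hI.1 hY hJY)
    (fun Y Z hY hZ hlt => by
      obtain ⟨e, h1, h2, h3⟩ := spike_aug hI hY hZ hlt
      exact ⟨e, h1, h2, h3⟩)
    (fun Y _ => Set.subset_univ Y)).matroid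

lemma SpM_E (hn : 0 < n) (I : Set (Set (En n))) (hI : IndepInHn n I) :
    (SpM n hn I hI).E = Set.univ := by
  simp [SpM]

lemma SpM_indep (hn : 0 < n) (I : Set (Set (En n))) (hI : IndepInHn n I) (J : Set (En n)) :
    (SpM n hn I hI).Indep J ↔ SpInd n I J := by
  simp [SpM]

/-! ### Rank computations -/

lemma mrank_eq_of {α : Type*} {M : Matroid α} {X : Set α} {r : ℕ}
    (hub : ∀ J, M.Indep J → J ⊆ X → J.ncard ≤ r)
    (hex : ∃ J, M.Indep J ∧ J ⊆ X ∧ J.ncard = r) : mrank M X = r := by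
  rw [mrank]
  apply le_antisymm
  · apply csSup_le
    · obtain ⟨J, hJ⟩ := hex
      exact ⟨r, J, hJ⟩
    · rintro k ⟨J, hJ1, hJ2, rfl⟩
      exact hub J hJ1 hJ2
  · apply le_csSup
    · refine ⟨r, ?_⟩
      rintro k ⟨J, hJ1, hJ2, rfl⟩
      exact hub J hJ1 hJ2
    · exact hex

lemma sel_witness {X : Set (En n)} {i0 : Fin n} (hi0 : i0 ∈ fullLegs X) :
    ∃ J0, J0 ⊆ X ∧ J0.ncard = legCount X + 1 ∧ (fullLegs J0).Subsingleton ∧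
      leg n i0 ⊆ J0 := by
  refine ⟨insert (i0, false) (sel X), ?_, ?_, ?_, ?_⟩
  · apply Set.insert_subset (hi0 (by simp [leg]))
    exact sel_subset X
  · have h1 : ((i0 : Fin n), false) ∉ sel X := by
      intro hc
      rcases hc.2 with h | h
      · simp at h
      · exact h (hi0 (by simp [leg]))
    rw [Set.ncard_insert_of_notMem h1 (toFinite _), ncard_sel]
  · intro a ha b hb
    have key : ∀ c ∈ fullLegs (insert ((i0 : Fin n), false) (sel X)), c = i0 := by
      intro c hc
      by_contra hcne
      have : leg n c ⊆ sel X := by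
        intro u hu
        rcases hc hu with h | h
        · exfalso
          apply hcne
          rw [← mem_leg.mp hu, h]
        · exact h
      have : c ∈ fullLegs (sel X) := this
      simp [fullLegs_sel] at this
    rw [key a ha, key b hb]
  · intro u hu
    simp only [leg, Set.mem_insert_iff, Set.mem_singleton_iff] at hu
    rcases hu with rfl | rfl
    · exact Set.mem_insert_of_mem _ ⟨hi0 (by simp [leg]), Or.inl rfl⟩
    · exact Set.mem_insert _ _


lemma witness_full {X : Set (En n)} {i0 : Fin n} (hi0 : i0 ∈ fullLegs X)
    {I : Set (Set (En n))} (hI1 : ∀ Z ∈ I, IsTransversal Z) :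
    ∃ J0, J0 ⊆ X ∧ J0.ncard = legCount X + 1 ∧ (fullLegs J0).Subsingleton ∧ J0 ∉ I ∧
      leg n i0 ⊆ J0 := by
  obtain ⟨J0, h1, h2, h3, h4⟩ := sel_witness hi0
  refine ⟨J0, h1, h2, h3, ?_, h4⟩
  intro hmem
  have := transversal_fullLegs (hI1 _ hmem)
  have hfull : i0 ∈ fullLegs J0 := h4
  simp_all

lemma legCount_lt_of_ne_univ {X : Set (En n)} (hmet : metLegs X ≠ univ) : legCount X < n := by
  have h1 : (metLegs X).ncard < (Set.univ : Set (Fin n)).ncard :=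
    Set.ncard_lt_ncard (Set.ssubset_univ_iff.mpr hmet) (toFinite _)
  rw [legCount_eq]
  simpa [Set.ncard_univ] using h1

lemma mrank_SpM_of_not_mem (hn : 2 < n) (hn0 : 0 < n) {I : Set (Set (En n))}
    (hI : IndepInHn n I) {X : Set (En n)} (hX : X ∉ I) :
    mrank (SpM n hn0 I hI) X = freeSpikeRank n X := by
  have hind : ∀ J, (SpM n hn0 I hI).Indep J ↔ SpInd n I J := SpM_indep hn0 I hI
  by_cases hmet : metLegs X = univ
  · rw [freeSpikeRank_of_metAll hmet]
    by_cases hF : fullLegs X = ∅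
    · -- X is a transversal
      have hX' : IsTransversal X := isTransversal_of hF hmet
      apply mrank_eq_of
      · intro J hJ _
        exact ((hind J).mp hJ).1
      · refine ⟨X, (hind X).mpr ⟨le_of_eq (transversal_ncard hX'), ?_, hX⟩, subset_rfl,
          transversal_ncard hX'⟩
        rw [hF]
        exact Set.subsingleton_empty
    · obtain ⟨i0, hi0⟩ := Set.nonempty_iff_ne_empty.mpr hF
      obtain ⟨J0, hs1, hs2, hs3, hs3', hs4⟩ := witness_full hi0 hI.1
      have hlc : legCount X = n := by
        rw [legCount_eq, hmet]
        simp [Set.ncard_univ]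
      -- remove one element outside leg i0
      have hbig : ¬ J0 ⊆ leg n i0 := by
        intro hc
        have := Set.ncard_le_ncard hc (toFinite _)
        rw [hs2, ncard_leg, hlc] at this
        omega
      obtain ⟨v, hv1, hv2⟩ : ∃ v ∈ J0, v ∉ leg n i0 := by
        by_contra hcon
        push_neg at hcon
        exact hbig hcon
      apply mrank_eq_of
      · intro J hJ _
        exact ((hind J).mp hJ).1
      · refine ⟨J0 \ {v}, (hind _).mpr ⟨?_, ?_, ?_⟩, (Set.diff_subset).trans hs1, ?_⟩
        · rw [Set.ncard_diff_singleton_of_mem hv1, hs2, hlc]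
          omega
        · exact hs3.anti (fullLegs_mono Set.diff_subset)
        · intro hmem
          have hleg : i0 ∈ fullLegs (J0 \ {v}) := by
            intro u hu
            refine ⟨hs4 hu, ?_⟩
            simp only [Set.mem_singleton_iff]
            rintro rfl
            exact hv2 hu
          have := transversal_fullLegs (hI.1 _ hmem)
          simp_all
        · rw [Set.ncard_diff_singleton_of_mem hv1, hs2, hlc]
          omega
  · by_cases hF : fullLegs X = ∅
    · rw [freeSpikeRank_else hmet hF]
      apply mrank_eq_of
      · intro J hJ hJX
        exact Set.ncard_le_ncard hJX (toFinite _)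
      · refine ⟨X, (hind X).mpr ⟨?_, ?_, hX⟩, subset_rfl, rfl⟩
        · exact (card_le_legCount hF).trans (legCount_le_n X)
        · rw [hF]; exact Set.subsingleton_empty
    · rw [freeSpikeRank_of_full hmet hF]
      obtain ⟨i0, hi0⟩ := Set.nonempty_iff_ne_empty.mpr hF
      obtain ⟨J0, hs1, hs2, hs3, hs3', _⟩ := witness_full hi0 hI.1
      have hlt : legCount X < n := legCount_lt_of_ne_univ hmet
      apply mrank_eq_of
      · intro J hJ hJX
        have hJ' := (hind J).mp hJ
        calc J.ncard ≤ legCount J + 1 := card_le_legCount_succ hJ'.2.1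
          _ ≤ legCount X + 1 := by
              have := legCount_mono hJX
              omega
      · exact ⟨J0, (hind _).mpr ⟨by omega, hs3, hs3'⟩, hs1, hs2⟩

lemma mrank_SpM_of_mem (hn : 2 < n) (hn0 : 0 < n) {I : Set (Set (En n))}
    (hI : IndepInHn n I) {X : Set (En n)} (hX : X ∈ I) :
    mrank (SpM n hn0 I hI) X = n - 1 := by
  have hind : ∀ J, (SpM n hn0 I hI).Indep J ↔ SpInd n I J := SpM_indep hn0 I hI
  have hXt : IsTransversal X := hI.1 _ hX
  have hXn : X.ncard = n := transversal_ncard hXt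
  obtain ⟨x0, hx0⟩ : X.Nonempty := by
    rw [← Set.ncard_pos (toFinite _), hXn]
    omega
  apply mrank_eq_of
  · intro J hJ hJX
    have hJ' := (hind J).mp hJ
    have hle : J.ncard ≤ n := by
      have := Set.ncard_le_ncard hJX (toFinite _)
      omega
    by_contra hcon
    have hJn : J.ncard = n := by omega
    have : J = X := Set.eq_of_subset_of_ncard_le hJX (by omega) (toFinite _)
    exact hJ'.2.2 (this ▸ hX)
  · refine ⟨X \ {x0}, (hind _).mpr ⟨?_, ?_, ?_⟩, Set.diff_subset, ?_⟩
    · rw [Set.ncard_diff_singleton_of_mem hx0, hXn]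
      omega
    · have : fullLegs (X \ {x0}) ⊆ fullLegs X := fullLegs_mono Set.diff_subset
      rw [transversal_fullLegs hXt] at this
      exact Set.subsingleton_empty.anti this
    · intro hmem
      have := transversal_ncard (hI.1 _ hmem)
      rw [Set.ncard_diff_singleton_of_mem hx0, hXn] at this
      omega
    · rw [Set.ncard_diff_singleton_of_mem hx0, hXn]

lemma not_transversal_univ (hn0 : 0 < n) : ¬ IsTransversal (Set.univ : Set (En n)) := by
  intro hc
  rcases hc ⟨0, hn0⟩ with ⟨_, h2⟩ | ⟨h1, _⟩
  · exact h2 (Set.mem_univ _)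
  · exact h1 (Set.mem_univ _)

lemma metLegs_univ : metLegs (Set.univ : Set (En n)) = univ := by
  ext i
  simp [metLegs]

lemma mrank_SpM_univ (hn : 2 < n) (hn0 : 0 < n) {I : Set (Set (En n))}
    (hI : IndepInHn n I) : mrank (SpM n hn0 I hI) Set.univ = n := by
  have huniv : (Set.univ : Set (En n)) ∉ I := fun hc => not_transversal_univ hn0 (hI.1 _ hc)
  rw [mrank_SpM_of_not_mem hn hn0 hI huniv, freeSpikeRank_of_metAll metLegs_univ]


/-! ### Choice of sides, complements of components -/

lemma choose_congr {α : Type*} {p q : α → Prop} (h : p = q) (hp : ∃ x, p x) (hq : ∃ x, q x) :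
    hp.choose = hq.choose := by subst h; rfl

lemma exists_side {α : Type*} (f : α → α) (hf : ∀ a, f (f a) = a) :
    ∃ s : α → Prop, ∀ a, f a ≠ a → (s (f a) ↔ ¬ s a) := by
  classical
  have P : ∀ a : α, ∃ x, x ∈ ({a, f a} : Set α) := fun a => ⟨a, Or.inl rfl⟩
  refine ⟨fun a => (P a).choose = a, ?_⟩
  intro a hne
  have hch : (P (f a)).choose = (P a).choose := by
    have h1 : (fun x => x ∈ ({f a, f (f a)} : Set α)) = (fun x => x ∈ ({a, f a} : Set α)) := by
      rw [hf, Set.pair_comm]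
  -- choose from equal existence statements
    exact choose_congr h1 (P (f a)) (P a)
  show (P (f a)).choose = f a ↔ ¬ ((P a).choose = a)
  rw [hch]
  rcases (P a).choose_spec with hc | hc
  · rw [hc]
    simp only [eq_self_iff_true, not_true, iff_false]
    exact fun hcc => hne hcc.symm
  · rw [Set.mem_singleton_iff] at hc
    rw [hc]
    simp only [eq_self_iff_true, true_iff]
    exact hne

variable {lam : Set (En n) → ℕ}

lemma glam_adj_compl (hsym : ∀ X, lam X = lam Xᶜ) {X Y : Set (En n)}
    (hXY : (Glam n lam).Adj X Y) : (Glam n lam).Adj Xᶜ Yᶜ := by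
  obtain ⟨⟨h1, h2, h3⟩, h4, h5⟩ := hXY
  refine ⟨⟨transversal_compl h1, transversal_compl h2, ?_⟩, ?_, ?_⟩
  · rwa [compl_symmDiff_compl]
  · show lam Xᶜ = n - 1
    rw [← hsym X]; exact h4
  · show lam Yᶜ = n - 1
    rw [← hsym Y]; exact h5

def glamHom (hsym : ∀ X, lam X = lam Xᶜ) : Glam n lam →g Glam n lam :=
  ⟨compl, fun {X Y} h => glam_adj_compl hsym h⟩

noncomputable def cmap (hsym : ∀ X, lam X = lam Xᶜ) :
    (Glam n lam).ConnectedComponent → (Glam n lam).ConnectedComponent :=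
  SimpleGraph.ConnectedComponent.map (glamHom hsym)

lemma cmap_mk (hsym : ∀ X, lam X = lam Xᶜ) (X : Set (En n)) :
    cmap hsym ((Glam n lam).connectedComponentMk X) = (Glam n lam).connectedComponentMk Xᶜ := by
  rfl

lemma cmap_cmap (hsym : ∀ X, lam X = lam Xᶜ) (c : (Glam n lam).ConnectedComponent) :
    cmap hsym (cmap hsym c) = c := by
  refine SimpleGraph.ConnectedComponent.ind (fun X => ?_) c
  rw [cmap_mk, cmap_mk, compl_compl]

end SpikeAux

/-- For even `n`, if no transversal `X` has `X` and `E_n − X` in the same component of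
`G_λ`, then the spiky function `λ` is the connectivity function of a matroid. -/
theorem stmt15 {n : ℕ} (hn : 2 < n) (heven : Even n)
    (lam : Set (En n) → ℕ) (hs : IsSpiky n lam)
    (h : ∀ X, IsTransversal X → ¬ (Glam n lam).Reachable X Xᶜ) :
    ∃ M : Matroid (En n), M.E = Set.univ ∧ ∀ X, (lam X : ℤ) = mconn M X := by
  classical
  obtain ⟨hsym, hnont, htri, hineq⟩ := hs
  have hn0 : 0 < n := by omega
  obtain ⟨side, hside⟩ := SpikeAux.exists_side (SpikeAux.cmap hsym) (SpikeAux.cmap_cmap hsym)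
  set Ii : Set (Set (En n)) := {X | IsTransversal X ∧ (lam X = n - 2 ∨ (lam X = n - 1 ∧
    (SpikeAux.par X ↔ side ((Glam n lam).connectedComponentMk X))))} with hIidef
  have hIi : IndepInHn n Ii := by
    refine ⟨fun X hX => hX.1, ?_⟩
    intro X hX Y hY hadj
    obtain ⟨hXt, hYt, hcard⟩ := hadj
    have hsum := hineq X Y hXt hYt hcard
    have hpar := SpikeAux.adj_parity hXt hYt hcard
    rcases hX.2 with hX2 | ⟨hX2, hX3⟩
    · rcases hY.2 with hY2 | ⟨hY2, hY3⟩ <;> omega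
    · rcases hY.2 with hY2 | ⟨hY2, hY3⟩
      · omega
      · have hGadj : (Glam n lam).Adj X Y := ⟨⟨hXt, hYt, hcard⟩, hX2, hY2⟩
        have hcc : (Glam n lam).connectedComponentMk X = (Glam n lam).connectedComponentMk Y :=
          SimpleGraph.ConnectedComponent.connectedComponentMk_eq_of_adj hGadj
        rw [hcc] at hX3
        tauto
  refine ⟨SpikeAux.SpM n hn0 Ii hIi, SpikeAux.SpM_E hn0 Ii hIi, ?_⟩
  intro X
  rw [mconn, SpikeAux.SpM_E hn0 Ii hIi]
  have hdiff : Set.univ \ X = Xᶜ := (Set.compl_eq_univ_diff X).symm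
  rw [hdiff, SpikeAux.mrank_SpM_univ hn hn0 hIi]
  by_cases hXt : IsTransversal X
  case neg =>
    have hXc : ¬ IsTransversal Xᶜ := fun hc => hXt (SpikeAux.isTransversal_compl_iff.mp hc)
    have h1 : X ∉ Ii := fun hc => hXt hc.1
    have h2 : Xᶜ ∉ Ii := fun hc => hXc hc.1
    rw [SpikeAux.mrank_SpM_of_not_mem hn hn0 hIi h1,
      SpikeAux.mrank_SpM_of_not_mem hn hn0 hIi h2]
    rw [hnont X hXt]
    rfl
  case pos =>
    have hfr : freeSpikeRank n X = n :=
      SpikeAux.freeSpikeRank_of_metAll (SpikeAux.transversal_metLegs hXt)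
    have hXcT := SpikeAux.transversal_compl hXt
    have hfrc : freeSpikeRank n Xᶜ = n :=
      SpikeAux.freeSpikeRank_of_metAll (SpikeAux.transversal_metLegs hXcT)
    rcases htri X hXt with hl | hl | hl
    · have h1 : X ∈ Ii := ⟨hXt, Or.inl hl⟩
      have h2 : Xᶜ ∈ Ii := ⟨hXcT, Or.inl (by rw [← hsym X]; exact hl)⟩
      rw [SpikeAux.mrank_SpM_of_mem hn hn0 hIi h1, SpikeAux.mrank_SpM_of_mem hn hn0 hIi h2, hl]
      omega
    · have hnec : SpikeAux.cmap hsym ((Glam n lam).connectedComponentMk X) ≠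
          (Glam n lam).connectedComponentMk X := by
        rw [SpikeAux.cmap_mk]
        intro hc
        exact h X hXt ((SimpleGraph.ConnectedComponent.eq.mp hc).symm)
      have hkey := hside _ hnec
      rw [SpikeAux.cmap_mk] at hkey
      have hXiff : X ∈ Ii ↔ (SpikeAux.par X ↔ side ((Glam n lam).connectedComponentMk X)) := by
        simp only [hIidef, Set.mem_setOf_eq]
        constructor
        · rintro ⟨_, hc | ⟨_, hc⟩⟩
          · omega
          · exact hc
        · intro hc
          exact ⟨hXt, Or.inr ⟨hl, hc⟩⟩
      have hXciff : Xᶜ ∈ Ii ↔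
          (SpikeAux.par X ↔ ¬ side ((Glam n lam).connectedComponentMk X)) := by
        simp only [hIidef, Set.mem_setOf_eq]
        have hlc : lam Xᶜ = n - 1 := by rw [← hsym X]; exact hl
        have hparc := SpikeAux.par_compl heven X
        constructor
        · rintro ⟨_, hc | ⟨_, hc⟩⟩
          · omega
          · rw [hparc, hkey] at hc
            exact hc
        · intro hc
          refine ⟨hXcT, Or.inr ⟨hlc, ?_⟩⟩
          rw [hparc, hkey]
          exact hc
      by_cases hsd : X ∈ Ii
      · have hcd : Xᶜ ∉ Ii := by
          rw [hXciff]
          rw [hXiff] at hsd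
          tauto
        rw [SpikeAux.mrank_SpM_of_mem hn hn0 hIi hsd,
          SpikeAux.mrank_SpM_of_not_mem hn hn0 hIi hcd, hfrc, hl]
        omega
      · have hcd : Xᶜ ∈ Ii := by
          rw [hXciff]
          rw [hXiff] at hsd
          tauto
        rw [SpikeAux.mrank_SpM_of_not_mem hn hn0 hIi hsd,
          SpikeAux.mrank_SpM_of_mem hn hn0 hIi hcd, hfr, hl]
        omega
    · have h1 : X ∉ Ii := by
        rintro ⟨_, hc | ⟨hc, _⟩⟩ <;> omega
      have h2 : Xᶜ ∉ Ii := by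
        have hlc : lam Xᶜ = n := by rw [← hsym X]; exact hl
        rintro ⟨_, hc | ⟨hc, _⟩⟩ <;> omega
      rw [SpikeAux.mrank_SpM_of_not_mem hn hn0 hIi h1,
        SpikeAux.mrank_SpM_of_not_mem hn hn0 hIi h2, hfr, hfrc, hl]
      omega
end

section
/- Let n be even and λ a spiky function on E_n. If there exists a transversal X such that X and E_n − X lie in the same connected component of G_λ, then λ is not the connectivity function of any matroid. -/
open Set

section Aux

variable {n : ℕ} {X Y : Set (En n)} {i : Fin n} {b : Bool}

lemma IsTransversal.compl (hX : IsTransversal X) : IsTransversal Xᶜ := by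
  intro i; rcases hX i with ⟨h1, h2⟩ | ⟨h1, h2⟩ <;> simp [h1, h2]

lemma IsTransversal.not_mem_iff (hX : IsTransversal X) : ((i, !b) ∈ X ↔ (i, b) ∉ X) := by
  rcases hX i with ⟨h1, h2⟩ | ⟨h1, h2⟩ <;> cases b <;> simp [h1, h2]

lemma leg_eq_pair (i : Fin n) (b : Bool) : leg n i = {(i, b), (i, !b)} := by
  cases b <;> simp [leg, Set.pair_comm]

lemma IsTransversal.exists_mem (hX : IsTransversal X) (i : Fin n) :
    ∃ b : Bool, (i, b) ∈ X ∧ (i, !b) ∉ X := by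
  rcases hX i with ⟨h1, h2⟩ | ⟨h1, h2⟩
  · exact ⟨true, h1, by simpa using h2⟩
  · exact ⟨false, h2, by simpa using h1⟩

lemma IsTransversal.ncard_eq (hX : IsTransversal X) : X.ncard = n := by
  classical
  set f : Fin n → En n := fun i => if (i, true) ∈ X then (i, true) else (i, false) with hf
  have hinj : Function.Injective f := by
    intro i j hij
    have : (f i).1 = (f j).1 := by rw [hij]
    simpa [hf, apply_ite Prod.fst] using this
  have hrange : X = f '' univ := by
    ext ⟨i, b⟩
    simp only [image_univ, mem_range, hf]
    constructor
    · intro hib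
      refine ⟨i, ?_⟩
      rcases hX i with ⟨h1, h2⟩ | ⟨h1, h2⟩
      · cases b
        · exact absurd hib h2
        · simp [h1]
      · cases b
        · simp [h1, h2]
        · exact absurd hib h1
    · rintro ⟨j, hj⟩
      by_cases hjt : (j, true) ∈ X <;> simp [hjt] at hj
      · obtain ⟨rfl, rfl⟩ := hj; exact hjt
      · obtain ⟨rfl, rfl⟩ := hj
        rcases hX j with ⟨h1, h2⟩ | ⟨h1, h2⟩
        · exact absurd h1 hjt
        · exact h2
  rw [hrange, Set.ncard_image_of_injective _ hinj, Set.ncard_univ]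
  simp

lemma IsTransversal.ne_compl (hn : 0 < n) (hX : IsTransversal X) : X ≠ Xᶜ := by
  intro h
  obtain ⟨b, hb, -⟩ := hX.exists_mem ⟨0, hn⟩
  have := hb; rw [h] at this; exact this hb

/-- Adjacent transversals differ in exactly one leg. -/
lemma symmDiff_eq_leg (hX : IsTransversal X) (hY : IsTransversal Y)
    (hcard : (symmDiff X Y).ncard = 2) : ∃ i, symmDiff X Y = leg n i := by
  have hne : (symmDiff X Y).Nonempty := by
    rw [← Set.ncard_pos (Set.toFinite _), hcard]; omega
  obtain ⟨⟨i, b⟩, hp⟩ := hne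
  have hq : (i, !b) ∈ symmDiff X Y := by
    rw [Set.mem_symmDiff] at hp ⊢
    rcases hp with ⟨h1, h2⟩ | ⟨h1, h2⟩
    · exact Or.inr ⟨hY.not_mem_iff.2 h2, fun h => (hX.not_mem_iff.1 h) h1⟩
    · exact Or.inl ⟨hX.not_mem_iff.2 h2, fun h => (hY.not_mem_iff.1 h) h1⟩
  have hpair : ({((i, b) : En n), (i, !b)} : Set (En n)) ⊆ symmDiff X Y := by
    rintro p (rfl | rfl) <;> simpa [hp]
  have hpc : ({((i, b) : En n), (i, !b)} : Set (En n)).ncard = 2 := by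
    rw [Set.ncard_pair]; simp
  refine ⟨i, ?_⟩
  rw [leg_eq_pair i b]
  exact (Set.eq_of_subset_of_ncard_le hpair (by rw [hcard, hpc]) (Set.toFinite _)).symm

/-- parity of a set of `Fin n` indexing the "true" elements. -/
noncomputable def par {n : ℕ} (X : Set (En n)) : ℕ := {i : Fin n | (i, true) ∈ X}.ncard % 2

lemma par_lt_two (X : Set (En n)) : par X < 2 := Nat.mod_lt _ (by omega)

lemma par_compl (heven : Even n) (X : Set (En n)) : par Xᶜ = par X := by
  have hc : {i : Fin n | (i, true) ∈ Xᶜ} = {i : Fin n | (i, true) ∈ X}ᶜ := by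
    ext i; simp
  have hle : {i : Fin n | (i, true) ∈ X}.ncard ≤ n := by
    have := Set.ncard_le_ncard (Set.subset_univ {i : Fin n | (i, true) ∈ X})
      (Set.toFinite (Set.univ : Set (Fin n)))
    simpa [Set.ncard_univ, Nat.card_eq_fintype_card] using this
  have hsum := Set.ncard_add_ncard_compl {i : Fin n | (i, true) ∈ X}
  simp only [Nat.card_eq_fintype_card, Fintype.card_fin] at hsum
  unfold par
  rw [hc]
  obtain ⟨k, hk⟩ := heven
  omega

lemma par_flip (hXY : symmDiff X Y = leg n i) : par X ≠ par Y := by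
  have hmem : ∀ j : Fin n, (j, true) ∈ Y ↔ ((j, true) ∈ X ↔ ¬ j = i) := by
    intro j
    have hY : Y = symmDiff X (symmDiff X Y) := (symmDiff_symmDiff_cancel_left X Y).symm
    rw [hY, hXY]
    rw [Set.mem_symmDiff]
    constructor
    · rintro (⟨h1, h2⟩ | ⟨h1, h2⟩)
      · have : ¬ j = i := by rintro rfl; exact h2 (by simp [leg])
        tauto
      · have : j = i := by simpa [leg] using h1
        tauto
    · intro h
      by_cases hj : j = i
      · subst hj
        exact Or.inr ⟨by simp [leg], by tauto⟩
      · exact Or.inl ⟨by tauto, by simp [leg, hj]⟩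
  have hts : {j : Fin n | (j, true) ∈ Y} = symmDiff {j : Fin n | (j, true) ∈ X} {i} := by
    ext j
    rw [Set.mem_symmDiff]
    simp only [Set.mem_setOf_eq, Set.mem_singleton_iff, hmem j]
    tauto
  unfold par
  rw [hts]
  by_cases hi : i ∈ {j : Fin n | (j, true) ∈ X}
  · have : symmDiff {j : Fin n | (j, true) ∈ X} {i} = {j : Fin n | (j, true) ∈ X} \ {i} := by
      rw [Set.symmDiff_def]
      have : {i} \ {j : Fin n | (j, true) ∈ X} = ∅ := by
        simpa [Set.diff_eq_empty]
      rw [this, Set.union_empty]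
    rw [this, Set.ncard_diff_singleton_of_mem hi]
    have : 0 < {j : Fin n | (j, true) ∈ X}.ncard := by
      rw [Set.ncard_pos (Set.toFinite _)]; exact ⟨i, hi⟩
    omega
  · have : symmDiff {j : Fin n | (j, true) ∈ X} {i} = insert i {j : Fin n | (j, true) ∈ X} := by
      rw [Set.symmDiff_def]
      have h1 : {j : Fin n | (j, true) ∈ X} \ {i} = {j : Fin n | (j, true) ∈ X} := by
        ext j; simp only [Set.mem_diff, Set.mem_singleton_iff, Set.mem_setOf_eq]
        exact ⟨fun h => h.1, fun h => ⟨h, fun hj => hi (hj ▸ h)⟩⟩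
      have h2 : ({i} : Set (Fin n)) \ {j : Fin n | (j, true) ∈ X} = {i} := by
        ext j; simp only [Set.mem_diff, Set.mem_singleton_iff, Set.mem_setOf_eq]
        exact ⟨fun h => h.1, fun h => ⟨h, h ▸ hi⟩⟩
      rw [h1, h2]
      ext j; simp [Set.mem_insert_iff, or_comm]
    rw [this, Set.ncard_insert_of_notMem hi]
    omega

lemma ncard_ne_singleton (a : Fin n) : {i : Fin n | i ≠ a}.ncard = n - 1 := by
  have h : {i : Fin n | i ≠ a} = ({a} : Set (Fin n))ᶜ := by ext; simp
  have h2 := Set.ncard_add_ncard_compl ({a} : Set (Fin n))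
  simp only [Set.ncard_singleton, Nat.card_eq_fintype_card, Fintype.card_fin] at h2
  rw [h]; omega

lemma diff_singleton_disjoint (hX : IsTransversal X) {e : En n} (he : e ∈ X) :
    Disjoint (leg n e.1) (X \ {e}) := by
  rw [Set.disjoint_left]
  rintro ⟨j, c⟩ hp ⟨hpX, hpe⟩
  have hj : j = e.1 := by
    rcases hp with h | h <;> simpa using congrArg Prod.fst h
  subst hj
  have heX : ((e.1, e.2) : En n) ∈ X := he
  have hne : ((e.1, !e.2) : En n) ∉ X := fun h => (hX.not_mem_iff.1 h) heX
  rcases Bool.eq_or_eq_not c e.2 with rfl | rfl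
  · exact hpe (Prod.ext rfl rfl)
  · exact hne hpX

lemma no_leg_subset (hX : IsTransversal X) {S : Set (En n)} (hS : S ⊆ X) :
    ¬ ∃ i, leg n i ⊆ S := by
  rintro ⟨i, hi⟩
  rcases hX i with ⟨h1, h2⟩ | ⟨h1, h2⟩
  · exact h2 (hS (hi (by simp [leg])))
  · exact h1 (hS (hi (by simp [leg])))

lemma not_transversal_diff (hX : IsTransversal X) {e : En n} (he : e ∈ X) :
    ¬ IsTransversal (X \ {e}) := by
  intro h
  have hd := diff_singleton_disjoint hX he
  rw [Set.disjoint_left] at hd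
  rcases h e.1 with ⟨h1, -⟩ | ⟨-, h2⟩
  · exact hd (by simp [leg]) h1
  · exact hd (by simp [leg]) h2

lemma lamN_diff_singleton (hX : IsTransversal X) {e : En n} (he : e ∈ X) :
    lamN n (X \ {e}) = (n : ℤ) - 1 := by
  have hn : 0 < n := e.1.pos
  have h1 : freeSpikeRank n (X \ {e}) = n - 1 := by
    unfold freeSpikeRank
    rw [if_neg, if_neg]
    · rw [Set.ncard_diff_singleton_of_mem he, hX.ncard_eq]
    · exact no_leg_subset hX Set.diff_subset
    · push_neg
      exact ⟨e.1, diff_singleton_disjoint hX he⟩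
  have h2 : freeSpikeRank n (X \ {e})ᶜ = n := by
    unfold freeSpikeRank
    rw [if_pos]
    intro i
    obtain ⟨b, hb, -⟩ := hX.compl.exists_mem i
    rw [Set.not_disjoint_iff]
    refine ⟨(i, b), by rw [leg_eq_pair i b]; simp, ?_⟩
    intro hmem
    exact hb hmem.1
  rw [lamN, h1, h2]
  push_cast [Nat.cast_sub hn]
  ring

/-- The auxiliary set `leg a ∪ {x_i : i ∉ {a,b}}` used to pin down the rank of the matroid. -/
def auxX (n : ℕ) (a b : Fin n) : Set (En n) :=
  {p | p.1 = a ∨ (p.1 ≠ a ∧ p.1 ≠ b ∧ p.2 = true)}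

variable {a b : Fin n}

lemma auxX_compl (hab : a ≠ b) :
    (auxX n a b)ᶜ = {p : En n | p.1 = b ∨ (p.1 ≠ a ∧ p.1 ≠ b ∧ p.2 = false)} := by
  ext ⟨j, c⟩
  simp only [auxX, Set.mem_compl_iff, Set.mem_setOf_eq]
  constructor
  · intro h
    push_neg at h
    obtain ⟨h1, h2⟩ := h
    by_cases hjb : j = b
    · exact Or.inl hjb
    · refine Or.inr ⟨h1, hjb, ?_⟩
      cases c
      · rfl
      · exact absurd rfl (h2 h1 hjb)
  · rintro (h | ⟨h1, h2, h3⟩)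
    · push_neg
      exact ⟨fun hj => hab (hj ▸ h), fun _ hjb => absurd h hjb⟩
    · push_neg
      exact ⟨h1, fun _ _ => by simp [h3]⟩

lemma auxX_ncard (hab : a ≠ b) : (auxX n a b).ncard = n := by
  classical
  set g : Fin n → En n := fun i => if i = a then (a, true) else if i = b then (a, false)
    else (i, true) with hg
  have hinj : Function.Injective g := by
    intro i j hij
    simp only [hg] at hij
    split_ifs at hij <;> simp_all [Prod.ext_iff]
  have hrange : auxX n a b = g '' Set.univ := by
    ext ⟨j, c⟩
    simp only [auxX, Set.mem_setOf_eq, image_univ, mem_range, hg]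
    constructor
    · rintro (h | ⟨h1, h2, h3⟩)
      · subst h
        cases c
        · exact ⟨b, by simp [Ne.symm hab]⟩
        · exact ⟨j, by simp⟩
      · exact ⟨j, by simp [h1, h2, h3]⟩
    · rintro ⟨i, hi⟩
      by_cases h1 : i = a
      · subst h1
        rw [if_pos rfl, Prod.ext_iff] at hi
        exact Or.inl hi.1.symm
      · by_cases h2 : i = b
        · subst h2
          rw [if_neg h1, if_pos rfl, Prod.ext_iff] at hi
          exact Or.inl hi.1.symm
        · rw [if_neg h1, if_neg h2, Prod.ext_iff] at hi
          obtain ⟨rfl, rfl⟩ := hi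
          exact Or.inr ⟨h1, h2, rfl⟩
  rw [hrange, Set.ncard_image_of_injective _ hinj, Set.ncard_univ]
  simp

lemma auxX_not_transversal (hab : a ≠ b) : ¬ IsTransversal (auxX n a b) := by
  intro h
  have h1 : ((b, true) : En n) ∉ auxX n a b := by simp [auxX, Ne.symm hab]
  have h2 : ((b, false) : En n) ∉ auxX n a b := by simp [auxX, Ne.symm hab]
  rcases h b with ⟨hb, -⟩ | ⟨-, hb⟩
  exacts [h1 hb, h2 hb]

lemma lamN_auxX (hab : a ≠ b) : lamN n (auxX n a b) = (n : ℤ) := by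
  have hn : 0 < n := a.pos
  have h1 : freeSpikeRank n (auxX n a b) = n := by
    unfold freeSpikeRank
    rw [if_neg, if_pos]
    · have hset : {i : Fin n | (i, true) ∈ auxX n a b ∨ (i, false) ∈ auxX n a b}
          = {i : Fin n | i ≠ b} := by
        ext i
        simp only [auxX, Set.mem_setOf_eq]
        constructor
        · rintro (h | h) <;> rcases h with h | ⟨-, h, -⟩
          · exact h ▸ hab
          · exact h
          · exact h ▸ hab
          · exact h
        · intro hib
          by_cases hia : i = a
          · exact Or.inl (Or.inl hia)
          · exact Or.inl (Or.inr ⟨hia, hib, trivial⟩)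
      unfold legCount
      rw [hset, ncard_ne_singleton]
      omega
    · exact ⟨a, fun p hp => by rcases hp with rfl | rfl <;> exact Or.inl rfl⟩
    · push_neg
      refine ⟨b, Set.disjoint_left.2 ?_⟩
      rintro p (rfl | rfl) <;> simp [auxX, Ne.symm hab]
  have h2 : freeSpikeRank n (auxX n a b)ᶜ = n := by
    rw [auxX_compl hab]
    unfold freeSpikeRank
    rw [if_neg, if_pos]
    · have hset : {i : Fin n |
          ((i, true) : En n) ∈ {p : En n | p.1 = b ∨ (p.1 ≠ a ∧ p.1 ≠ b ∧ p.2 = false)}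
          ∨ ((i, false) : En n) ∈ {p : En n | p.1 = b ∨ (p.1 ≠ a ∧ p.1 ≠ b ∧ p.2 = false)}}
          = {i : Fin n | i ≠ a} := by
        ext i
        simp only [Set.mem_setOf_eq]
        constructor
        · rintro (h | h) <;> rcases h with h | ⟨h, -, -⟩
          · exact h ▸ (Ne.symm hab)
          · exact h
          · exact h ▸ (Ne.symm hab)
          · exact h
        · intro hia
          by_cases hib : i = b
          · exact Or.inl (Or.inl hib)
          · exact Or.inr (Or.inr ⟨hia, hib, trivial⟩)
      unfold legCount
      rw [hset, ncard_ne_singleton]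
      omega
    · refine ⟨b, fun p hp => ?_⟩
      rcases hp with rfl | rfl <;> exact Or.inl rfl
    · push_neg
      refine ⟨a, Set.disjoint_left.2 ?_⟩
      rintro p (rfl | rfl) <;> simp [hab]
  rw [lamN, h1, h2]
  push_cast
  ring
end Aux

section RankLemmas
variable {α : Type*} [Finite α] {M : Matroid α} {I J X Y : Set α}

lemma mrank_bdd (M : Matroid α) (X : Set α) :
    BddAbove {k | ∃ I, M.Indep I ∧ I ⊆ X ∧ I.ncard = k} := by
  refine ⟨Nat.card α, ?_⟩
  rintro k ⟨I, -, -, rfl⟩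
  simpa [Set.ncard_univ] using Set.ncard_le_ncard (Set.subset_univ I) (Set.toFinite _)

lemma ncard_le_mrank (hI : M.Indep I) (hIX : I ⊆ X) : I.ncard ≤ mrank M X :=
  le_csSup (mrank_bdd M X) ⟨I, hI, hIX, rfl⟩

lemma mrank_eq_of_basis' (hB : M.IsBasis' I X) : mrank M X = I.ncard := by
  refine le_antisymm (csSup_le ⟨0, ∅, M.empty_indep, Set.empty_subset _, Set.ncard_empty _⟩ ?_)
    (ncard_le_mrank hB.indep hB.subset)
  rintro k ⟨J, hJ, hJX, rfl⟩
  obtain ⟨K, hK, hJK⟩ := hJ.subset_isBasis'_of_subset hJX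
  have hcard : K.ncard = I.ncard :=
    (Matroid.isBase_restrict_iff'.2 hK).ncard_eq_ncard_of_isBase (Matroid.isBase_restrict_iff'.2 hB)
  calc J.ncard ≤ K.ncard := Set.ncard_le_ncard hJK (Set.toFinite _)
    _ = I.ncard := hcard

lemma mrank_le_ncard (M : Matroid α) (X : Set α) : mrank M X ≤ X.ncard := by
  obtain ⟨I, hI⟩ := M.exists_isBasis' X
  rw [mrank_eq_of_basis' hI]
  exact Set.ncard_le_ncard hI.subset (Set.toFinite _)

lemma mrank_mono (M : Matroid α) (hXY : X ⊆ Y) : mrank M X ≤ mrank M Y := by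
  obtain ⟨I, hI⟩ := M.exists_isBasis' X
  rw [mrank_eq_of_basis' hI]
  exact ncard_le_mrank hI.indep (hI.subset.trans hXY)

lemma mrank_submod (M : Matroid α) (X Y : Set α) :
    mrank M (X ∩ Y) + mrank M (X ∪ Y) ≤ mrank M X + mrank M Y := by
  obtain ⟨I, hI⟩ := M.exists_isBasis' (X ∩ Y)
  obtain ⟨J, hJ, hIJ⟩ := hI.indep.subset_isBasis'_of_subset
    (hI.subset.trans (Set.inter_subset_left.trans Set.subset_union_left))
  rw [mrank_eq_of_basis' hI, mrank_eq_of_basis' hJ]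
  have h1 : (J ∩ X).ncard + (J ∩ Y).ncard = J.ncard + (J ∩ (X ∩ Y)).ncard := by
    have hu : (J ∩ X) ∪ (J ∩ Y) = J := by
      rw [← Set.inter_union_distrib_left, Set.inter_eq_left]; exact hJ.subset
    have hi : (J ∩ X) ∩ (J ∩ Y) = J ∩ (X ∩ Y) := by
      ext p; simp; tauto
    rw [← Set.ncard_union_add_ncard_inter (J ∩ X) (J ∩ Y), hu, hi]
  have h2 : I.ncard ≤ (J ∩ (X ∩ Y)).ncard :=
    Set.ncard_le_ncard (Set.subset_inter hIJ hI.subset) (Set.toFinite _)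
  have h3 : (J ∩ X).ncard ≤ mrank M X :=
    ncard_le_mrank (hJ.indep.subset Set.inter_subset_left) Set.inter_subset_right
  have h4 : (J ∩ Y).ncard ≤ mrank M Y :=
    ncard_le_mrank (hJ.indep.subset Set.inter_subset_left) Set.inter_subset_right
  omega

end RankLemmas
section MainArg

variable {n : ℕ} {lam : Set (En n) → ℕ} {M : Matroid (En n)} {X T T' A C : Set (En n)}

lemma conn_eq (hE : M.E = Set.univ) (hconn : ∀ X, (lam X : ℤ) = mconn M X) (X : Set (En n)) :
    (lam X : ℤ) = (mrank M X : ℤ) + (mrank M Xᶜ : ℤ) - (mrank M Set.univ : ℤ) := by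
  rw [hconn X, mconn, hE, ← Set.compl_eq_univ_diff]

lemma ncard_compl_En (X : Set (En n)) : Xᶜ.ncard = 2 * n - X.ncard := by
  have h := Set.ncard_add_ncard_compl X
  simp only [Nat.card_eq_fintype_card, Fintype.card_prod, Fintype.card_fin,
    Fintype.card_bool] at h
  omega

lemma mrank_univ_eq (hn : 2 < n) (hE : M.E = Set.univ)
    (hconn : ∀ X, (lam X : ℤ) = mconn M X) (hs : IsSpiky n lam) :
    mrank M (Set.univ : Set (En n)) = n := by
  set a : Fin n := ⟨0, by omega⟩ with ha
  set b : Fin n := ⟨1, by omega⟩ with hb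
  have hab : a ≠ b := by simp [ha, hb, Fin.ext_iff]
  have hlam : (lam (auxX n a b) : ℤ) = (n : ℤ) := by
    rw [hs.2.1 _ (auxX_not_transversal hab), lamN_auxX hab]
  have heq := conn_eq hE hconn (auxX n a b)
  have h1 : mrank M (auxX n a b) ≤ n := by
    have := mrank_le_ncard M (auxX n a b)
    rwa [auxX_ncard hab] at this
  have h2 : mrank M (auxX n a b)ᶜ ≤ n := by
    have := mrank_le_ncard M (auxX n a b)ᶜ
    rw [ncard_compl_En, auxX_ncard hab] at this
    omega
  have h3 : mrank M (auxX n a b) ≤ mrank M Set.univ := mrank_mono M (Set.subset_univ _)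
  have h4 : mrank M (auxX n a b)ᶜ ≤ mrank M Set.univ := mrank_mono M (Set.subset_univ _)
  omega

lemma rank_diff_singleton (hn : 2 < n) (hE : M.E = Set.univ)
    (hconn : ∀ X, (lam X : ℤ) = mconn M X) (hs : IsSpiky n lam)
    (hX : IsTransversal X) {e : En n} (he : e ∈ X) :
    mrank M (X \ {e}) = n - 1 ∧ mrank M (X \ {e})ᶜ = n := by
  have hruniv := mrank_univ_eq hn hE hconn hs
  have hlam : (lam (X \ {e}) : ℤ) = (n : ℤ) - 1 := by
    rw [hs.2.1 _ (not_transversal_diff hX he), lamN_diff_singleton hX he]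
  have heq := conn_eq hE hconn (X \ {e})
  have h1 : mrank M (X \ {e}) ≤ n - 1 := by
    have := mrank_le_ncard M (X \ {e})
    rwa [Set.ncard_diff_singleton_of_mem he, hX.ncard_eq] at this
  have h2 : mrank M (X \ {e})ᶜ ≤ n := by
    have := mrank_mono M (Set.subset_univ (X \ {e})ᶜ)
    omega
  omega

lemma rank_add_compl (hn : 2 < n) (hE : M.E = Set.univ)
    (hconn : ∀ X, (lam X : ℤ) = mconn M X) (hs : IsSpiky n lam)
    (hX : IsTransversal X) (hlam : (lam X : ℤ) = (n : ℤ) - 1) :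
    (mrank M X : ℤ) + (mrank M Xᶜ : ℤ) = 2 * (n : ℤ) - 1 ∧
      mrank M X ≤ n ∧ mrank M Xᶜ ≤ n := by
  have hruniv := mrank_univ_eq hn hE hconn hs
  have heq := conn_eq hE hconn X
  have h1 : mrank M X ≤ n := by
    have := mrank_le_ncard M X; rwa [hX.ncard_eq] at this
  have h2 : mrank M Xᶜ ≤ n := by
    have := mrank_le_ncard M Xᶜ; rwa [hX.compl.ncard_eq] at this
  refine ⟨by omega, h1, h2⟩

/-- No two adjacent transversals are both dependent. -/
lemma not_adj_dep (hn : 2 < n) (hE : M.E = Set.univ)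
    (hconn : ∀ X, (lam X : ℤ) = mconn M X) (hs : IsSpiky n lam)
    (hadj : (Hn n).Adj T T') (hT : mrank M T < n) (hT' : mrank M T' < n) : False := by
  obtain ⟨hTt, hT't, hcard⟩ := hadj
  obtain ⟨i, hsd⟩ := symmDiff_eq_leg hTt hT't hcard
  obtain ⟨c, hc, hnc⟩ := hTt.exists_mem i
  set e : En n := (i, c) with hedef
  set f : En n := (i, !c) with hfdef
  have hef : e ≠ f := by simp [hedef, hfdef, Prod.ext_iff]
  have hlege : e ∈ leg n i := by rw [leg_eq_pair i c]; exact Or.inl rfl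
  have hlegf : f ∈ leg n i := by rw [leg_eq_pair i c]; exact Or.inr rfl
  have hesd : e ∈ symmDiff T T' := hsd ▸ hlege
  have hfsd : f ∈ symmDiff T T' := hsd ▸ hlegf
  have hint : T ∩ T' = T \ {e} := by
    ext p
    constructor
    · rintro ⟨hp1, hp2⟩
      refine ⟨hp1, fun hpe => ?_⟩
      rw [Set.mem_singleton_iff] at hpe; subst hpe
      rw [Set.mem_symmDiff] at hesd
      tauto
    · rintro ⟨hp1, hp2⟩
      refine ⟨hp1, ?_⟩
      by_contra hp3
      have : p ∈ symmDiff T T' := Set.mem_symmDiff.2 (Or.inl ⟨hp1, hp3⟩)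
      rw [hsd, leg_eq_pair i c] at this
      simp only [Set.mem_insert_iff, Set.mem_singleton_iff] at this
      rcases this with h | h
      · exact hp2 h
      · subst h; exact hnc hp1
  have huni : T ∪ T' = (Tᶜ \ {f})ᶜ := by
    have hcompl : (Tᶜ \ {f})ᶜ = T ∪ {f} := by
      ext p
      simp only [Set.mem_compl_iff, Set.mem_diff, Set.mem_union, Set.mem_singleton_iff]
      tauto
    rw [hcompl]
    ext p
    simp only [Set.mem_union, Set.mem_singleton_iff]
    constructor
    · rintro (hp | hp)
      · exact Or.inl hp
      · by_cases hpT : p ∈ T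
        · exact Or.inl hpT
        · have : p ∈ symmDiff T T' := Set.mem_symmDiff.2 (Or.inr ⟨hp, hpT⟩)
          rw [hsd, leg_eq_pair i c] at this
          simp only [Set.mem_insert_iff, Set.mem_singleton_iff] at this
          rcases this with h | h
          · subst h; exact absurd hc hpT
          · exact Or.inr h
    · rintro (hp | rfl)
      · exact Or.inl hp
      · rw [Set.mem_symmDiff] at hfsd
        rcases hfsd with ⟨h1, -⟩ | ⟨h1, -⟩
        · exact absurd h1 hnc
        · exact Or.inr h1
  have h1 := (rank_diff_singleton hn hE hconn hs hTt hc).1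
  have h2 := (rank_diff_singleton hn hE hconn hs hTt.compl hnc).2
  have hsub := mrank_submod M T T'
  rw [hint, huni, h1, h2] at hsub
  omega

end MainArg
section FinalArg

variable {n : ℕ} {lam : Set (En n) → ℕ} {M : Matroid (En n)} {A B C : Set (En n)}

lemma edge_flip (hn : 2 < n) (hE : M.E = Set.univ)
    (hconn : ∀ X, (lam X : ℤ) = mconn M X) (hs : IsSpiky n lam)
    (hadj : (Glam n lam).Adj A C) :
    IsTransversal A ∧ IsTransversal C ∧ (lam A : ℤ) = (n : ℤ) - 1 ∧
      (lam C : ℤ) = (n : ℤ) - 1 ∧ (mrank M A < n ↔ ¬ mrank M C < n) ∧ par A ≠ par C := by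
  obtain ⟨hH, hA, hC⟩ := hadj
  obtain ⟨hAt, hCt, hcard⟩ := hH
  have hA' : lam A = n - 1 := hA
  have hC' : lam C = n - 1 := hC
  have hlA : (lam A : ℤ) = (n : ℤ) - 1 := by omega
  have hlC : (lam C : ℤ) = (n : ℤ) - 1 := by omega
  obtain ⟨i, hsd⟩ := symmDiff_eq_leg hAt hCt hcard
  have hpar : par A ≠ par C := par_flip hsd
  have hsumA := rank_add_compl hn hE hconn hs hAt hlA
  have hsumC := rank_add_compl hn hE hconn hs hCt hlC
  have hlAc : (lam Aᶜ : ℤ) = (n : ℤ) - 1 := by rw [← hs.1 A]; exact hlA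
  have hlCc : (lam Cᶜ : ℤ) = (n : ℤ) - 1 := by rw [← hs.1 C]; exact hlC
  have hsumAc := rank_add_compl hn hE hconn hs hAt.compl hlAc
  refine ⟨hAt, hCt, hlA, hlC, ?_, hpar⟩
  constructor
  · intro hdA hdC
    exact not_adj_dep hn hE hconn hs ⟨hAt, hCt, hcard⟩ hdA hdC
  · intro hndC
    have hdCc : mrank M Cᶜ < n := by omega
    have hadjc : (Hn n).Adj Aᶜ Cᶜ := ⟨hAt.compl, hCt.compl, by rwa [compl_symmDiff_compl]⟩
    have hndAc : ¬ mrank M Aᶜ < n := fun hdAc =>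
      not_adj_dep hn hE hconn hs hadjc hdAc hdCc
    omega

lemma walk_result (hn : 2 < n) (hE : M.E = Set.univ)
    (hconn : ∀ X, (lam X : ℤ) = mconn M X) (hs : IsSpiky n lam)
    (W : (Glam n lam).Walk A B) :
    A = B ∨ (IsTransversal A ∧ (lam A : ℤ) = (n : ℤ) - 1 ∧
      (mrank M A < n ↔ (mrank M B < n ↔ par A = par B))) := by
  induction W with
  | nil => exact Or.inl rfl
  | @cons A C B h p ih =>
    right
    obtain ⟨hAt, hCt, hlA, hlC, hdep, hpar⟩ := edge_flip hn hE hconn hs h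
    have hpA := par_lt_two A
    have hpB := par_lt_two B
    have hpC := par_lt_two C
    rcases ih with rfl | ⟨-, -, hiff⟩
    · refine ⟨hAt, hlA, ?_⟩
      have h1 : ¬ (par A = par C) := hpar
      tauto
    · refine ⟨hAt, hlA, ?_⟩
      have h2 : (par A = par B) ↔ ¬ (par C = par B) := by omega
      tauto

end FinalArg

/-- For even `n`, if some transversal `X` has `X` and `E_n − X` in the same component of

`G_λ`, then the spiky function `λ` is not the connectivity function of any matroid. -/
theorem stmt16 {n : ℕ} (hn : 2 < n) (heven : Even n)
    (lam : Set (En n) → ℕ) (hs : IsSpiky n lam)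
    (h : ∃ X, IsTransversal X ∧ (Glam n lam).Reachable X Xᶜ) :
    ¬ ∃ M : Matroid (En n), M.E = Set.univ ∧ ∀ X, (lam X : ℤ) = mconn M X := by
  rintro ⟨M, hE, hconn⟩
  obtain ⟨X, hX, hreach⟩ := h
  obtain ⟨W⟩ := hreach
  rcases walk_result hn hE hconn hs W with heq | ⟨-, hlA, hiff⟩
  · exact hX.ne_compl (by omega) heq
  · have hpar : par X = par Xᶜ := (par_compl heven X).symm
    obtain ⟨hsum, h1, h2⟩ := rank_add_compl hn hE hconn hs hX hlA
    have hd : mrank M X < n ↔ ¬ mrank M Xᶜ < n := by omega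
    tauto
end
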